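/- The 5×5 real matrix M = [[-4,2,0,0,0],[-2,-2,√6,0,0],[0,-√6,0,√6,0],[0,0,-√6,2,2],[0,0,0,-2,4]] is nilpotent of index exactly 5, i.e. M⁵ = 0 and M⁴ ≠ 0. -/
import Mathlib

open Matrix Real

noncomputable def M3 : Matrix (Fin 5) (Fin 5) ℝ :=
  !![-4, 2, 0, 0, 0;
     -2, -2, Real.sqrt 6, 0, 0;
     0, -Real.sqrt 6, 0, Real.sqrt 6, 0;
     0, 0, -Real.sqrt 6, 2, 2;
     0, 0, 0, -2, 4]

noncomputable def M3sq : Matrix (Fin 5) (Fin 5) ℝ :=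
  !![12, -12, 2*Real.sqrt 6, 0, 0;
     12, -6, -2*Real.sqrt 6, 6, 0;
     2*Real.sqrt 6, 2*Real.sqrt 6, -12, 2*Real.sqrt 6, 2*Real.sqrt 6;
     0, 6, -2*Real.sqrt 6, -6, 12;
     0, 0, 2*Real.sqrt 6, -12, 12]

noncomputable def M3p4 : Matrix (Fin 5) (Fin 5) ℝ :=
  !![24, -48, 24*Real.sqrt 6, -48, 24;
     48, -96, 48*Real.sqrt 6, -96, 48;
     24*Real.sqrt 6, -48*Real.sqrt 6, 144, -48*Real.sqrt 6, 24*Real.sqrt 6;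
     48, -96, 48*Real.sqrt 6, -96, 48;
     24, -48, 24*Real.sqrt 6, -48, 24]

lemma hs : Real.sqrt 6 ^ 2 = 6 := Real.sq_sqrt (by norm_num)

lemma hM3sq : M3 * M3 = M3sq := by
  ext i j
  fin_cases i <;> fin_cases j <;>
    · simp [M3, M3sq, Matrix.mul_apply, Fin.sum_univ_five, Matrix.vecHead, Matrix.vecTail]
      try nlinarith [hs]

lemma hM3p4 : M3sq * M3sq = M3p4 := by
  ext i j
  fin_cases i <;> fin_cases j <;>
    · simp [M3sq, M3p4, Matrix.mul_apply, Fin.sum_univ_five, Matrix.vecHead, Matrix.vecTail]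
      try nlinarith [hs]

lemma hM3p5 : M3p4 * M3 = 0 := by
  ext i j
  fin_cases i <;> fin_cases j <;>
    · simp [M3, M3p4, Matrix.mul_apply, Fin.sum_univ_five, Matrix.vecHead, Matrix.vecTail]
      try nlinarith [hs]

theorem stmt_3 : M3 ^ 5 = 0 ∧ M3 ^ 4 ≠ 0 := by
  have h4 : M3 ^ 4 = M3p4 := by
    have : M3 ^ 4 = (M3 * M3) * (M3 * M3) := by rw [pow_succ, pow_succ, pow_succ, pow_one, mul_assoc]
    rw [this, hM3sq, hM3p4]
  constructor
  · have : M3 ^ 5 = M3 ^ 4 * M3 := pow_succ M3 4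
    rw [this, h4, hM3p5]
  · rw [h4]
    intro h
    have := congrFun (congrFun h 0) 0
    simp [M3p4] at this
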